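/- Let c : ℤ×ℤ → ℝ be finitely supported with c(k,l) = c(l,k), and define μ̂(k₁,k₂) := Σ_{y₁,y₂} c(y₁,y₂) e^{−2πi(k₁y₁ + k₂y₂)} and B_ε(f,g)(x) := Σ_{k,l} c(k,l) f(x+εk) g(x+εl). Let ε = 2^{−N} and let f, g : εℤ → ℝ satisfy ε Σ_{x∈εℤ} |f(x)| < ∞ and ε Σ_{x∈εℤ} |g(x)| < ∞, with discrete Fourier transforms 𝓕^ε f(k) := ε Σ_{x∈εℤ} f(x) e^{−2πikx}. Then ε Σ_{x∈εℤ} B_ε(f,g)(x) = ∫_{−1/(2ε)}^{1/(2ε)} 𝓕^ε f(k) · 𝓕^ε g(−k) · μ̂(−εk, εk) dk. -/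

import Mathlib

open Real

noncomputable section

/-- The discrete Fourier transform `𝓕^ε f(k) = ε Σ_{x∈εℤ} f(x) e^{-2πikx}`,
for a grid function given by its values `f j` at the points `ε j`. -/
def dFT (ε : ℝ) (f : ℤ → ℝ) (k : ℝ) : ℂ :=
  ε * ∑' j : ℤ, (f j : ℂ) * Complex.exp (-(2 * Real.pi * k * (ε * j)) * Complex.I)

/-- The Fourier transform `μ̂(k₁,k₂) = Σ_{y₁,y₂} c(y₁,y₂) e^{-2πi(k₁y₁+k₂y₂)}`
of the finitely supported measure with weights `c`. -/
def muHat (c : (ℤ × ℤ) →₀ ℝ) (k₁ k₂ : ℝ) : ℂ :=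
  ∑ p ∈ c.support,
    (c p : ℂ) * Complex.exp (-(2 * Real.pi * (k₁ * p.1 + k₂ * p.2)) * Complex.I)

/-- The twisted discrete product `B_ε(f,g)(x) = Σ_{k,l} c(k,l) f(x+εk) g(x+εl)`
on grid indices. -/
def BprodFn (c : (ℤ × ℤ) →₀ ℝ) (f g : ℤ → ℝ) : ℤ → ℝ :=
  fun j => ∑ p ∈ c.support, c p * f (j + p.1) * g (j + p.2)

/-- complex exponential of a purely imaginary number -/
def cex (t : ℝ) : ℂ := Complex.exp (t * Complex.I)

lemma cex_norm (t : ℝ) : ‖cex t‖ = 1 := by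
  simp [cex, Complex.norm_exp_ofReal_mul_I]

lemma cex_mul (s t : ℝ) : cex s * cex t = cex (s + t) := by
  simp [cex, ← Complex.exp_add]; ring_nf

lemma cex_cont (a : ℝ) : Continuous fun k : ℝ => cex (a * k) := by
  unfold cex
  exact Complex.continuous_exp.comp
    ((Complex.continuous_ofReal.comp (continuous_const.mul continuous_id)).mul continuous_const)

lemma cex_integral (ε : ℝ) (hε : 0 < ε) (n : ℤ) :
    (∫ k in (-(1 / (2 * ε)))..(1 / (2 * ε)), cex (2 * π * ε * k * n)) =
      if n = 0 then ((ε : ℂ))⁻¹ else 0 := by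
  rcases eq_or_ne n 0 with h | h
  · subst h
    simp only [if_pos rfl]
    have : ∀ k : ℝ, cex (2 * π * ε * k * ((0:ℤ):ℝ)) = 1 := by
      intro k; simp [cex]
    simp only [this, intervalIntegral.integral_const]
    rw [sub_neg_eq_add]
    push_cast
    rw [Complex.real_smul]
    push_cast
    rw [mul_one]
    rw [← add_div]
    field_simp
    ring
  · rw [if_neg h]
    set cc : ℂ := ((2 * π * ε * n : ℝ) : ℂ) * Complex.I with hcc
    have hc : cc ≠ 0 := by
      apply mul_ne_zero _ Complex.I_ne_zero
      norm_cast
      have h1 : (0:ℝ) < 2 * π * ε := by positivity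
      have h2 : (n:ℝ) ≠ 0 := Int.cast_ne_zero.mpr h
      exact mul_ne_zero (ne_of_gt h1) h2
    have hrw : ∀ k : ℝ, cex (2 * π * ε * k * n) = Complex.exp (cc * k) := by
      intro k
      unfold cex
      congr 1
      rw [hcc]; push_cast; ring
    simp only [hrw]
    rw [integral_exp_mul_complex hc]
    have key : cc * ((1 / (2 * ε) : ℝ) : ℂ) = cc * ((-(1 / (2 * ε)) : ℝ) : ℂ)
        + n * (2 * π * Complex.I) := by
      rw [hcc]
      have hε' : (ε : ℂ) ≠ 0 := by exact_mod_cast ne_of_gt hε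
      push_cast
      field_simp
      ring
    rw [key, Complex.exp_add, Complex.exp_int_mul_two_pi_mul_I, mul_one, sub_self, zero_div]

set_option maxHeartbeats 4000000 in
/-- Parseval-type identity for the twisted discrete product. -/
theorem statement17 (c : (ℤ × ℤ) →₀ ℝ) (hc : ∀ k l : ℤ, c (k, l) = c (l, k))
    (N : ℕ) (ε : ℝ) (hε : ε = ((2 : ℝ) ^ N)⁻¹)
    (f g : ℤ → ℝ) (hf : Summable fun j : ℤ => |f j|)
    (hg : Summable fun j : ℤ => |g j|) :
    ((ε * ∑' j : ℤ, BprodFn c f g j : ℝ) : ℂ) =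
      ∫ k in (-(1 / (2 * ε)))..(1 / (2 * ε)),
        dFT ε f k * dFT ε g (-k) * muHat c (-(ε * k)) (ε * k) := by
  have hε0 : 0 < ε := by rw [hε]; positivity
  set L : ℝ := 1 / (2 * ε) with hLdef
  have hL0 : 0 < L := by rw [hLdef]; positivity
  have hLle : -L ≤ L := by linarith
  set S := c.support with hS
  set G : ℝ := ∑' j : ℤ, |g j| with hGdef
  have hgle : ∀ m : ℤ, |g m| ≤ G := fun m => hg.le_tsum m fun _ _ => abs_nonneg _
  have habs : ∀ a : ℤ, Summable fun j : ℤ => |f j * g (j + a)| := by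
    intro a
    apply Summable.of_nonneg_of_le (fun j => abs_nonneg _) (fun j => ?_) (hf.mul_right G)
    rw [abs_mul]
    exact mul_le_mul_of_nonneg_left (hgle _) (abs_nonneg _)
  have hsum : ∀ a : ℤ, Summable fun j : ℤ => f j * g (j + a) := fun a => (habs a).of_abs
  have hsum' : ∀ p : ℤ × ℤ, Summable fun j : ℤ => f (j + p.1) * g (j + p.2) := by
    intro p
    have h1 : Summable ((fun j : ℤ => f j * g (j + (p.2 - p.1))) ∘ (Equiv.addRight p.1)) :=
      (Equiv.addRight p.1).summable_iff.mpr (hsum (p.2 - p.1))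
    apply h1.congr
    intro j
    simp only [Function.comp_apply, Equiv.coe_addRight]
    congr 2
    ring
  have hshift : ∀ p : ℤ × ℤ,
      (∑' j : ℤ, f (j + p.1) * g (j + p.2)) = ∑' j : ℤ, f j * g (j + (p.2 - p.1)) := by
    intro p
    have h := (Equiv.addRight p.1).tsum_eq (fun j : ℤ => f j * g (j + (p.2 - p.1)))
    rw [← h]
    apply tsum_congr
    intro j
    simp only [Equiv.coe_addRight]
    congr 2
    ring
  have hfg2 : Summable fun i : ℤ × ℤ => |f i.1| * |g i.2| :=
    hf.mul_of_nonneg hg (fun _ => abs_nonneg _) fun _ => abs_nonneg _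
  -- LHS
  have lhs_eq : ε * ∑' j : ℤ, BprodFn c f g j
      = ∑ p ∈ S, ε * c p * ∑' j : ℤ, f j * g (j + (p.2 - p.1)) := by
    unfold BprodFn
    rw [Summable.tsum_finsetSum (fun p _ => ((hsum' p).mul_left (c p)).congr fun j => by ring)]
    rw [Finset.mul_sum]
    refine Finset.sum_congr rfl fun p _ => ?_
    rw [show (fun j : ℤ => c p * f (j + p.1) * g (j + p.2))
        = fun j : ℤ => c p * (f (j + p.1) * g (j + p.2)) from funext fun j => by ring]
    rw [tsum_mul_left, hshift p]
    ring
  -- RHS machinery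
  set Gfun : ℤ × ℤ → ℝ → ℂ := fun i k => ∑ p ∈ S,
      ((ε ^ 2 * f i.1 * g i.2 * c p : ℝ) : ℂ)
        * cex (2 * π * ε * k * ((i.2 - i.1 + p.1 - p.2 : ℤ) : ℝ)) with hGfun
  have hpt : ∀ k : ℝ, dFT ε f k * dFT ε g (-k) * muHat c (-(ε * k)) (ε * k)
      = ∑' i : ℤ × ℤ, Gfun i k := by
    intro k
    have h1 : dFT ε f k = ε * ∑' j : ℤ, (f j : ℂ) * cex (2 * π * ε * k * ((-j : ℤ) : ℝ)) := by
      unfold dFT cex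
      congr 1
      apply tsum_congr; intro j
      congr 2
      push_cast; ring
    have h2 : dFT ε g (-k) = ε * ∑' m : ℤ, (g m : ℂ) * cex (2 * π * ε * k * ((m : ℤ) : ℝ)) := by
      unfold dFT cex
      congr 1
      apply tsum_congr; intro m
      congr 2
      push_cast; ring
    have h3 : muHat c (-(ε * k)) (ε * k)
        = ∑ p ∈ S, (c p : ℂ) * cex (2 * π * ε * k * ((p.1 - p.2 : ℤ) : ℝ)) := by
      unfold muHat cex
      refine Finset.sum_congr rfl fun p _ => ?_
      congr 2
      push_cast; ring
    rw [h1, h2, h3]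
    have hsf : Summable fun j : ℤ => ‖(f j : ℂ) * cex (2 * π * ε * k * ((-j : ℤ) : ℝ))‖ := by
      apply hf.congr
      intro j
      rw [norm_mul, cex_norm, mul_one, Complex.norm_real, Real.norm_eq_abs]
    have hsg : Summable fun m : ℤ => ‖(g m : ℂ) * cex (2 * π * ε * k * ((m : ℤ) : ℝ))‖ := by
      apply hg.congr
      intro m
      rw [norm_mul, cex_norm, mul_one, Complex.norm_real, Real.norm_eq_abs]
    calc ((ε : ℂ) * ∑' j : ℤ, (f j : ℂ) * cex (2 * π * ε * k * ((-j : ℤ) : ℝ)))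
          * ((ε : ℂ) * ∑' m : ℤ, (g m : ℂ) * cex (2 * π * ε * k * ((m : ℤ) : ℝ)))
          * (∑ p ∈ S, (c p : ℂ) * cex (2 * π * ε * k * ((p.1 - p.2 : ℤ) : ℝ)))
        = ((ε : ℂ) * (ε : ℂ))
            * ((∑' j : ℤ, (f j : ℂ) * cex (2 * π * ε * k * ((-j : ℤ) : ℝ)))
              * ∑' m : ℤ, (g m : ℂ) * cex (2 * π * ε * k * ((m : ℤ) : ℝ)))
            * (∑ p ∈ S, (c p : ℂ) * cex (2 * π * ε * k * ((p.1 - p.2 : ℤ) : ℝ))) := by ring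
      _ = ((ε : ℂ) * (ε : ℂ))
            * (∑' i : ℤ × ℤ, ((f i.1 : ℂ) * cex (2 * π * ε * k * ((-i.1 : ℤ) : ℝ)))
                * ((g i.2 : ℂ) * cex (2 * π * ε * k * ((i.2 : ℤ) : ℝ))))
            * (∑ p ∈ S, (c p : ℂ) * cex (2 * π * ε * k * ((p.1 - p.2 : ℤ) : ℝ))) := by
          rw [tsum_mul_tsum_of_summable_norm hsf hsg]
      _ = ∑' i : ℤ × ℤ, (((ε : ℂ) * (ε : ℂ))
            * (((f i.1 : ℂ) * cex (2 * π * ε * k * ((-i.1 : ℤ) : ℝ)))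
                * ((g i.2 : ℂ) * cex (2 * π * ε * k * ((i.2 : ℤ) : ℝ))))
            * (∑ p ∈ S, (c p : ℂ) * cex (2 * π * ε * k * ((p.1 - p.2 : ℤ) : ℝ)))) := by
          rw [← tsum_mul_left, ← tsum_mul_right]
      _ = ∑' i : ℤ × ℤ, Gfun i k := by
          apply tsum_congr
          intro i
          rw [hGfun]
          simp only
          rw [Finset.mul_sum]
          refine Finset.sum_congr rfl fun p _ => ?_
          have hcex : cex (2 * π * ε * k * ((-i.1 : ℤ) : ℝ)) * cex (2 * π * ε * k * ((i.2 : ℤ) : ℝ))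
              * cex (2 * π * ε * k * ((p.1 - p.2 : ℤ) : ℝ))
              = cex (2 * π * ε * k * ((i.2 - i.1 + p.1 - p.2 : ℤ) : ℝ)) := by
            rw [cex_mul, cex_mul]
            congr 1
            push_cast; ring
          calc ((ε : ℂ) * (ε : ℂ))
                * (((f i.1 : ℂ) * cex (2 * π * ε * k * ((-i.1 : ℤ) : ℝ)))
                  * ((g i.2 : ℂ) * cex (2 * π * ε * k * ((i.2 : ℤ) : ℝ))))
                * ((c p : ℂ) * cex (2 * π * ε * k * ((p.1 - p.2 : ℤ) : ℝ)))
              = ((ε ^ 2 * f i.1 * g i.2 * c p : ℝ) : ℂ)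
                * (cex (2 * π * ε * k * ((-i.1 : ℤ) : ℝ)) * cex (2 * π * ε * k * ((i.2 : ℤ) : ℝ))
                  * cex (2 * π * ε * k * ((p.1 - p.2 : ℤ) : ℝ))) := by push_cast; ring
            _ = ((ε ^ 2 * f i.1 * g i.2 * c p : ℝ) : ℂ)
                * cex (2 * π * ε * k * ((i.2 - i.1 + p.1 - p.2 : ℤ) : ℝ)) := by rw [hcex]
  -- continuity & integrability of each Gfun i
  have hcont1 : ∀ a : ℝ, Continuous fun k : ℝ => cex (2 * π * ε * k * a) := by
    intro a
    exact (cex_cont (2 * π * ε * a)).congr fun k => by congr 1; ring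
  have hcont : ∀ i : ℤ × ℤ, Continuous (Gfun i) := by
    intro i
    rw [hGfun]
    apply continuous_finset_sum
    intro p _
    exact Continuous.mul continuous_const (hcont1 _)
  have hint : ∀ i : ℤ × ℤ, MeasureTheory.Integrable (Gfun i)
      (MeasureTheory.volume.restrict (Set.Ioc (-L) L)) := fun i =>
    (hcont i).integrableOn_Ioc
  haveI hfinmeas : MeasureTheory.IsFiniteMeasure
      (MeasureTheory.volume.restrict (Set.Ioc (-L) L)) := by
    constructor
    rw [MeasureTheory.Measure.restrict_apply_univ]
    exact measure_Ioc_lt_top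
  set K : ℝ := ∑ p ∈ c.support, |c p| with hKdef
  have hGbnd : ∀ (i : ℤ × ℤ) (k : ℝ), ‖Gfun i k‖ ≤ ε ^ 2 * |f i.1| * |g i.2| * K := by
    intro i k
    rw [hGfun]
    simp only
    refine (norm_sum_le _ _).trans ?_
    rw [hKdef, Finset.mul_sum]
    apply Finset.sum_le_sum
    intro p _
    rw [norm_mul, cex_norm, mul_one, Complex.norm_real, Real.norm_eq_abs]
    exact le_of_eq (by rw [abs_mul, abs_mul, abs_mul, abs_of_nonneg (sq_nonneg ε)])
  have hnint : ∀ i : ℤ × ℤ,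
      (∫ k, ‖Gfun i k‖ ∂(MeasureTheory.volume.restrict (Set.Ioc (-L) L)))
        ≤ ε ^ 2 * |f i.1| * |g i.2| * K * (2 * L) := by
    intro i
    have h0 : 0 ≤ ∫ k, ‖Gfun i k‖ ∂(MeasureTheory.volume.restrict (Set.Ioc (-L) L)) :=
      MeasureTheory.integral_nonneg fun k => norm_nonneg _
    have hb := MeasureTheory.norm_integral_le_of_norm_le_const
      (μ := MeasureTheory.volume.restrict (Set.Ioc (-L) L))
      (f := fun k => ‖Gfun i k‖) (C := ε ^ 2 * |f i.1| * |g i.2| * K)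
      (Filter.Eventually.of_forall fun k => by
        rw [Real.norm_eq_abs, abs_of_nonneg (norm_nonneg _)]
        exact hGbnd i k)
    rw [Real.norm_eq_abs, abs_of_nonneg h0] at hb
    refine hb.trans ?_
    rw [MeasureTheory.measureReal_restrict_apply_univ, Real.volume_real_Ioc_of_le hLle]
    exact le_of_eq (by rw [sub_neg_eq_add]; ring)
  have hsumnorm : Summable fun i : ℤ × ℤ =>
      ∫ k, ‖Gfun i k‖ ∂(MeasureTheory.volume.restrict (Set.Ioc (-L) L)) := by
    apply Summable.of_nonneg_of_le
      (fun i => MeasureTheory.integral_nonneg fun k => norm_nonneg _) hnint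
    exact ((hfg2.mul_left (ε ^ 2 * K * (2 * L))).congr fun i => by ring)
  have hdsum : ∀ p : ℤ × ℤ, Summable fun i : ℤ × ℤ =>
      ((ε ^ 2 * f i.1 * g i.2 * c p : ℝ) : ℂ)
        * (if (i.2 - i.1 + p.1 - p.2 : ℤ) = 0 then ((ε : ℂ))⁻¹ else 0) := by
    intro p
    apply Summable.of_norm_bounded
      (g := fun i : ℤ × ℤ => (ε ^ 2 * |c p| * ε⁻¹) * (|f i.1| * |g i.2|)) (hfg2.mul_left _)
    intro i
    rw [norm_mul]
    have h1 : ‖((ε ^ 2 * f i.1 * g i.2 * c p : ℝ) : ℂ)‖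
        = ε ^ 2 * |f i.1| * |g i.2| * |c p| := by
      rw [Complex.norm_real, Real.norm_eq_abs, abs_mul, abs_mul, abs_mul,
        abs_of_nonneg (sq_nonneg ε)]
    have h2 : ‖(if (i.2 - i.1 + p.1 - p.2 : ℤ) = 0 then ((ε : ℂ))⁻¹ else 0)‖ ≤ ε⁻¹ := by
      split_ifs
      · rw [norm_inv, Complex.norm_real, Real.norm_eq_abs, abs_of_nonneg hε0.le]
      · simp [inv_nonneg.mpr hε0.le]
    rw [h1]
    refine le_trans (mul_le_mul_of_nonneg_left h2 (by positivity)) (le_of_eq (by ring))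
  -- main computation
  rw [lhs_eq]
  symm
  calc ∫ k in (-L)..L, dFT ε f k * dFT ε g (-k) * muHat c (-(ε * k)) (ε * k)
      = ∫ k in (-L)..L, ∑' i : ℤ × ℤ, Gfun i k :=
        intervalIntegral.integral_congr fun k _ => hpt k
    _ = ∫ k in Set.Ioc (-L) L, ∑' i : ℤ × ℤ, Gfun i k := intervalIntegral.integral_of_le hLle
    _ = ∑' i : ℤ × ℤ, ∫ k in Set.Ioc (-L) L, Gfun i k :=
        (MeasureTheory.integral_tsum_of_summable_integral_norm hint hsumnorm).symm
    _ = ∑' i : ℤ × ℤ, ∑ p ∈ c.support, ((ε ^ 2 * f i.1 * g i.2 * c p : ℝ) : ℂ)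
          * (if (i.2 - i.1 + p.1 - p.2 : ℤ) = 0 then ((ε : ℂ))⁻¹ else 0) := by
        apply tsum_congr
        intro i
        rw [← intervalIntegral.integral_of_le hLle, hGfun]
        simp only
        rw [intervalIntegral.integral_finsetSum
          (fun p _ => by apply Continuous.intervalIntegrable; exact Continuous.mul continuous_const (hcont1 _))]
        refine Finset.sum_congr rfl fun p _ => ?_
        rw [intervalIntegral.integral_const_mul, hLdef, cex_integral ε hε0]
    _ = ∑ p ∈ c.support, ∑' i : ℤ × ℤ, ((ε ^ 2 * f i.1 * g i.2 * c p : ℝ) : ℂ)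
          * (if (i.2 - i.1 + p.1 - p.2 : ℤ) = 0 then ((ε : ℂ))⁻¹ else 0) :=
        Summable.tsum_finsetSum fun p _ => hdsum p
    _ = ∑ p ∈ c.support, ((ε * c p * ∑' j : ℤ, f j * g (j + (p.2 - p.1)) : ℝ) : ℂ) := by
        refine Finset.sum_congr rfl fun p _ => ?_
        have inner : ∀ j : ℤ, (∑' m : ℤ, ((ε ^ 2 * f j * g m * c p : ℝ) : ℂ)
            * (if (m - j + p.1 - p.2 : ℤ) = 0 then ((ε : ℂ))⁻¹ else 0))
            = ((ε * f j * g (j + (p.2 - p.1)) * c p : ℝ) : ℂ) := by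
          intro j
          have hcongr : ∀ m : ℤ, ((ε ^ 2 * f j * g m * c p : ℝ) : ℂ)
              * (if (m - j + p.1 - p.2 : ℤ) = 0 then ((ε : ℂ))⁻¹ else 0)
              = if m = j + (p.2 - p.1)
                then ((ε * f j * g (j + (p.2 - p.1)) * c p : ℝ) : ℂ) else 0 := by
            intro m
            by_cases h : m = j + (p.2 - p.1)
            · rw [if_pos (by omega), if_pos h, h]
              have hεne : (ε : ℂ) ≠ 0 := by exact_mod_cast ne_of_gt hε0
              push_cast
              field_simp
            · rw [if_neg (by omega), if_neg h, mul_zero]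
          rw [tsum_congr hcongr, tsum_ite_eq]
        rw [(hdsum p).tsum_prod]
        dsimp only
        rw [tsum_congr inner, ← Complex.ofReal_tsum]
        congr 1
        rw [show (fun j : ℤ => ε * f j * g (j + (p.2 - p.1)) * c p)
            = fun j : ℤ => (ε * c p) * (f j * g (j + (p.2 - p.1))) from funext fun j => by ring,
          tsum_mul_left]
    _ = ((∑ p ∈ c.support, ε * c p * ∑' j : ℤ, f j * g (j + (p.2 - p.1)) : ℝ) : ℂ) := by
        norm_cast
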